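/- Let n ≥ 1 and η ∈ (0,1). Define V: ℝⁿ → ℝ by V(λ) = ∏_{i=1}^n (1 + λ_i²)^{1/2}, and set e_i = λ_i/(1 + λ_i²). Then at every λ ∈ ℝⁿ: (i) ∂_i V = e_i V, ∂_{ii} V = V/(1+λ_i²)², and ∂_{ij} V = V e_i e_j for i ≠ j, so that the Hessian matrix of V satisfies (∂_{ij}V)/V = e_i e_j + δ_{ij}(1 − λ_i²)/(1+λ_i²)²; and (ii) if |λ_i| ≤ 1 − η for all i, then for every σ ∈ ℝⁿ, σᵀ (D²V(λ)) σ ≥ V(λ) · min_i [(1−λ_i²)/(1+λ_i²)²] · |σ|² ≥ (η(2−η)/4) |σ|². In particular V is uniformly convex on the cube {λ : max_i |λ_i| ≤ 1−η}. -/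

import Mathlib

open MeasureTheory Metric Set Filter

noncomputable section

abbrev Euc (n : ℕ) := EuclideanSpace ℝ (Fin n)
abbrev Mat (n : ℕ) := Fin n → Fin n → ℝ

def eb (n : ℕ) (i : Fin n) : Euc n := EuclideanSpace.single i 1

abbrev B1 (n : ℕ) : Set (Euc n) := Metric.ball 0 1

/-- Squared Frobenius (Hilbert–Schmidt) norm of a matrix. -/
def frob2 {n : ℕ} (σ : Mat n) : ℝ := ∑ i, ∑ j, (σ i j) ^ 2

/-- Frobenius (Hilbert–Schmidt) norm of a matrix. -/
def frob {n : ℕ} (σ : Mat n) : ℝ := Real.sqrt (frob2 σ)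

/-- The matrix with a single entry 1 in position `(i,j)`. -/
def Em {n : ℕ} (i j : Fin n) : Mat n := fun a b => if a = i ∧ b = j then 1 else 0

def symmMat {n : ℕ} (σ : Mat n) : Prop := ∀ i j, σ i j = σ j i

/-- Hessian matrix of a (smooth) function, via the iterated Fréchet derivative. -/
def hess {n : ℕ} (η : Euc n → ℝ) (x : Euc n) : Mat n :=
  fun i j => iteratedFDeriv ℝ 2 η x ![eb n i, eb n j]

/-- `η` is a `C_c^∞` test function with support inside `Ω`. -/
def TestFun {n : ℕ} (Ω : Set (Euc n)) (η : Euc n → ℝ) : Prop :=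
  ContDiff ℝ (⊤ : ℕ∞) η ∧ HasCompactSupport η ∧ tsupport η ⊆ Ω

/-- `u ∈ W^{2,∞}(Ω)`, with (symmetric) a.e. second derivative matrix `D2u`. -/
structure IsW2infOn {n : ℕ} (u : Euc n → ℝ) (Ω : Set (Euc n)) (D2u : Euc n → Mat n) : Prop where
  diffOn : DifferentiableOn ℝ u Ω
  meas : AEStronglyMeasurable D2u (volume.restrict Ω)
  hess_ae : ∀ᵐ x ∂(volume.restrict Ω), ∃ L : Euc n →L[ℝ] (Euc n →L[ℝ] ℝ),
      HasFDerivAt (fderiv ℝ u) L x ∧ ∀ i j, D2u x i j = (L (eb n i)) (eb n j)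
  symm_ae : ∀ᵐ x ∂(volume.restrict Ω), symmMat (D2u x)
  bdd : ∃ M : ℝ, ∀ᵐ x ∂(volume.restrict Ω), frob (D2u x) ≤ M

/-- `u ∈ W^{2,p}(Ω)`, with a.e. second derivative matrix `D2u` in `L^p`. -/
structure IsW2pOn {n : ℕ} (u : Euc n → ℝ) (Ω : Set (Euc n)) (D2u : Euc n → Mat n) (p : ℝ) :
    Prop where
  diffOn : DifferentiableOn ℝ u Ω
  meas : AEStronglyMeasurable D2u (volume.restrict Ω)
  hess_ae : ∀ᵐ x ∂(volume.restrict Ω), ∃ L : Euc n →L[ℝ] (Euc n →L[ℝ] ℝ),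
      HasFDerivAt (fderiv ℝ u) L x ∧ ∀ i j, D2u x i j = (L (eb n i)) (eb n j)
  lp : IntegrableOn (fun x => frob (D2u x) ^ p) Ω

/-- `‖D2u‖_{L^∞(Ω)} ≤ K`. -/
def BddBy {n : ℕ} (D2u : Euc n → Mat n) (Ω : Set (Euc n)) (K : ℝ) : Prop :=
  ∀ᵐ x ∂(volume.restrict Ω), frob (D2u x) ≤ K

/-- `f` has bounded mean oscillation with modulus `ω` on `Ω`. -/
def BMOModulus {n : ℕ} (f : Euc n → Mat n) (Ω : Set (Euc n)) (ω : ℝ) : Prop :=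
  ∀ (z : Euc n) (r : ℝ), 0 < r → Metric.ball z r ⊆ Ω →
    (⨍ x in Metric.ball z r, frob (f x - (⨍ y in Metric.ball z r, f y))) ≤ ω

/-- `F` is uniformly convex on `U` with ellipticity constant `Λ`. -/
def UnifConvexOn {n : ℕ} (F : Mat n → ℝ) (U : Set (Mat n)) (Λ : ℝ) : Prop :=
  ∀ ξ ∈ U, ∀ σ : Mat n, symmMat σ →
    Λ * frob2 σ ≤ iteratedFDerivWithin ℝ 2 F U ξ ![σ, σ]

/-- Weak Euler–Lagrange equation `∫ F^{ij}(D²u) η_{ij} = 0` for all test functions on `Ω`. -/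
def FEulerLagrange {n : ℕ} (F : Mat n → ℝ) (U : Set (Mat n)) (D2u : Euc n → Mat n)
    (Ω : Set (Euc n)) : Prop :=
  ∀ η, TestFun Ω η →
    ∫ x in Ω, (∑ i, ∑ j, fderivWithin ℝ F U (D2u x) (Em i j) * hess η x i j) = 0

abbrev Coeffs (n : ℕ) := Mat n → Fin n → Fin n → Fin n → Fin n → ℝ

/-- Weak double-divergence equation `∫ a^{ij,kl}(D²u) u_{ij} η_{kl} = 0` on `Ω`. -/
def RegularEq {n : ℕ} (a : Coeffs n) (D2u : Euc n → Mat n) (Ω : Set (Euc n)) : Prop :=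
  ∀ η, TestFun Ω η →
    ∫ x in Ω, (∑ i, ∑ j, ∑ k, ∑ l, a (D2u x) i j k l * D2u x i j * hess η x k l) = 0

/-- Constant-coefficient double-divergence equation `∫ c^{ij,kl} w_{ij} η_{kl} = 0` on `Ω`. -/
def ConstCoeffEq {n : ℕ} (c : Fin n → Fin n → Fin n → Fin n → ℝ) (D2w : Euc n → Mat n)
    (Ω : Set (Euc n)) : Prop :=
  ∀ η, TestFun Ω η →
    ∫ x in Ω, (∑ i, ∑ j, ∑ k, ∑ l, c i j k l * D2w x i j * hess η x k l) = 0

/-- Legendre ellipticity for a constant coefficient tensor. -/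
def LegendreConst {n : ℕ} (c : Fin n → Fin n → Fin n → Fin n → ℝ) (lam : ℝ) : Prop :=
  ∀ σ : Mat n, symmMat σ → lam * frob2 σ ≤ ∑ i, ∑ j, ∑ k, ∑ l, c i j k l * σ i j * σ k l

/-- The linearized coefficients `b^{ij,kl}` attached to `a`, `D²u`, step `h` and direction `m`. -/
def bcoef {n : ℕ} (a : Coeffs n) (U : Set (Mat n)) (D2u : Euc n → Mat n)
    (h : ℝ) (m : Fin n) (x : Euc n) (i j k l : Fin n) : ℝ :=
  a (D2u (x + h • eb n m)) i j k l +
    ∑ p, ∑ q, (∫ t in (0:ℝ)..(1:ℝ),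
      fderivWithin ℝ (fun M => a M p q k l) U
        (t • D2u (x + h • eb n m) + (1 - t) • D2u x) (Em i j)) * D2u x p q

/-- Difference quotient of `u` in direction `e_m` with step `h`. -/
def dq {n : ℕ} (u : Euc n → ℝ) (h : ℝ) (m : Fin n) (x : Euc n) : ℝ :=
  (u (x + h • eb n m) - u x) / h

/-- Difference quotient of a matrix-valued function (e.g. of the Hessian of `u`). -/
def dqM {n : ℕ} (D2u : Euc n → Mat n) (h : ℝ) (m : Fin n) (x : Euc n) : Mat n :=
  fun i j => (D2u (x + h • eb n m) i j - D2u x i j) / h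

/-- `D3u` is a weak (third-order) derivative of `D2u` on `Ω`. -/
def IsWeakThird {n : ℕ} (Ω : Set (Euc n)) (D2u : Euc n → Mat n)
    (D3u : Euc n → Fin n → Fin n → Fin n → ℝ) : Prop :=
  ∀ (m i j : Fin n) (η : Euc n → ℝ), TestFun Ω η →
    ∫ x in Ω, D2u x i j * fderiv ℝ η x (eb n m) = - ∫ x in Ω, D3u x m i j * η x

/-- Integrand of the `W^{3,p}`-norm (to the power `p`). -/
def w3pDen {n : ℕ} (u : Euc n → ℝ) (D2u : Euc n → Mat n)
    (D3u : Euc n → Fin n → Fin n → Fin n → ℝ) (p : ℝ) (x : Euc n) : ℝ :=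
  |u x| ^ p + (∑ i, (fderiv ℝ u x (eb n i)) ^ 2) ^ (p / 2) + (frob2 (D2u x)) ^ (p / 2)
    + (∑ m, ∑ i, ∑ j, (D3u x m i j) ^ 2) ^ (p / 2)

/-- Integrand of the squared `W^{2,2}`-norm. -/
def w22Den {n : ℕ} (u : Euc n → ℝ) (D2u : Euc n → Mat n) (x : Euc n) : ℝ :=
  (u x) ^ 2 + (∑ i, (fderiv ℝ u x (eb n i)) ^ 2) + frob2 (D2u x)

/-- `u ∈ W^{2,2}(Ω)` with weak gradient `Du` and weak Hessian `D2u`. -/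
structure IsW22On {n : ℕ} (u : Euc n → ℝ) (Ω : Set (Euc n))
    (Du : Euc n → Fin n → ℝ) (D2u : Euc n → Mat n) : Prop where
  weak1 : ∀ (m : Fin n) (η : Euc n → ℝ), TestFun Ω η →
    ∫ x in Ω, u x * fderiv ℝ η x (eb n m) = - ∫ x in Ω, Du x m * η x
  weak2 : ∀ (i m : Fin n) (η : Euc n → ℝ), TestFun Ω η →
    ∫ x in Ω, Du x i * fderiv ℝ η x (eb n m) = - ∫ x in Ω, D2u x i m * η x
  l2 : IntegrableOn (fun x => (u x) ^ 2 + (∑ i, (Du x i) ^ 2) + frob2 (D2u x)) Ω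

/-- `(f, Df, D2f)` lies in the `W^{2,2}(Ω)`-closure of `C_c^∞(Ω)`. -/
def InW22Closure {n : ℕ} (Ω : Set (Euc n)) (f : Euc n → ℝ) (Df : Euc n → Fin n → ℝ)
    (D2f : Euc n → Mat n) : Prop :=
  ∃ ηs : ℕ → Euc n → ℝ, (∀ k, TestFun Ω (ηs k)) ∧
    Filter.Tendsto (fun k => ∫ x in Ω,
      ((ηs k x - f x) ^ 2 + (∑ i, (fderiv ℝ (ηs k) x (eb n i) - Df x i) ^ 2) +
        frob2 (fun i j => hess (ηs k) x i j - D2f x i j))) Filter.atTop (nhds 0)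
namespace AreaConv

def ee (t : ℝ) : ℝ := t / (1 + t ^ 2)
def ee' (t : ℝ) : ℝ := (1 - t ^ 2) / (1 + t ^ 2) ^ 2

lemma one_add_sq_pos (t : ℝ) : 0 < 1 + t ^ 2 := by positivity

lemma hasDerivAt_ee (t : ℝ) : HasDerivAt ee (ee' t) t := by
  have h := (hasDerivAt_id t).div ((hasDerivAt_const t (1:ℝ)).add (hasDerivAt_pow 2 t))
    (one_add_sq_pos t).ne'
  refine h.congr_deriv ?_
  have := (one_add_sq_pos t).ne'
  simp only [ee', Pi.add_apply, id]
  field_simp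
  ring

lemma hasDerivAt_logf (t : ℝ) :
    HasDerivAt (fun s : ℝ => Real.log (1 + s ^ 2) / 2) (ee t) t := by
  have h := ((Real.hasDerivAt_log (one_add_sq_pos t).ne').comp t
    ((hasDerivAt_const t (1:ℝ)).add (hasDerivAt_pow 2 t))).div_const 2
  refine h.congr_deriv ?_
  have := (one_add_sq_pos t).ne'
  simp only [ee]
  field_simp
  ring

variable (n : ℕ)

def S (lam : Fin n → ℝ) : ℝ := ∑ i, Real.log (1 + lam i ^ 2) / 2

def Vf (lam : Fin n → ℝ) : ℝ := ∏ i, Real.sqrt (1 + lam i ^ 2)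

variable {n}

lemma sqrt_eq_exp (t : ℝ) : Real.sqrt (1 + t ^ 2) = Real.exp (Real.log (1 + t ^ 2) / 2) := by
  have h : Real.exp (Real.log (1 + t ^ 2) / 2) ^ 2 = 1 + t ^ 2 := by
    rw [← Real.exp_nat_mul,
      show ((2 : ℕ) : ℝ) * (Real.log (1 + t ^ 2) / 2) = Real.log (1 + t ^ 2) by push_cast; ring,
      Real.exp_log (one_add_sq_pos t)]
  conv_lhs => rw [← h]
  exact Real.sqrt_sq (Real.exp_nonneg _)

lemma Vf_eq_exp (lam : Fin n → ℝ) : Vf n lam = Real.exp (S n lam) := by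
  rw [Vf, S, Real.exp_sum]
  exact Finset.prod_congr rfl fun i _ => sqrt_eq_exp (lam i)

lemma Vf_pos (lam : Fin n → ℝ) : 0 < Vf n lam := by
  rw [Vf_eq_exp]; exact Real.exp_pos _

lemma one_le_Vf (lam : Fin n → ℝ) : 1 ≤ Vf n lam := by
  rw [Vf_eq_exp]
  refine Real.one_le_exp ?_
  exact Finset.sum_nonneg fun i _ => by
    have := Real.log_nonneg (by nlinarith [sq_nonneg (lam i)] : (1:ℝ) ≤ 1 + lam i ^ 2)
    linarith

def Sd (lam : Fin n → ℝ) : (Fin n → ℝ) →L[ℝ] ℝ :=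
  ∑ i, ee (lam i) • (ContinuousLinearMap.proj i : (Fin n → ℝ) →L[ℝ] ℝ)

lemma hasFDerivAt_S (lam : Fin n → ℝ) : HasFDerivAt (S n) (Sd lam) lam := by
  refine HasFDerivAt.fun_sum fun i _ => ?_
  have hp : HasFDerivAt (fun l : Fin n → ℝ => l i)
      (ContinuousLinearMap.proj i : (Fin n → ℝ) →L[ℝ] ℝ) lam :=
    (ContinuousLinearMap.proj i : (Fin n → ℝ) →L[ℝ] ℝ).hasFDerivAt
  exact (hasDerivAt_logf (lam i)).comp_hasFDerivAt lam hp

def Vd (lam : Fin n → ℝ) : (Fin n → ℝ) →L[ℝ] ℝ := Vf n lam • Sd lam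

lemma hasFDerivAt_Vf (lam : Fin n → ℝ) : HasFDerivAt (Vf n) (Vd lam) lam := by
  have h := (Real.hasDerivAt_exp (S n lam)).comp_hasFDerivAt lam (hasFDerivAt_S lam)
  have he : Vf n = Real.exp ∘ S n := funext fun l => Vf_eq_exp l
  rw [he, Vd, Vf_eq_exp]
  exact h

lemma Vd_apply (lam v : Fin n → ℝ) : Vd lam v = Vf n lam * ∑ i, ee (lam i) * v i := by
  simp [Vd, Sd, ContinuousLinearMap.sum_apply, Finset.mul_sum]

def Cd (lam : Fin n → ℝ) (i : Fin n) : (Fin n → ℝ) →L[ℝ] ℝ :=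
  Vf n lam • (ee' (lam i) • (ContinuousLinearMap.proj i : (Fin n → ℝ) →L[ℝ] ℝ))
    + ee (lam i) • Vd lam

lemma hasFDerivAt_c (lam : Fin n → ℝ) (i : Fin n) :
    HasFDerivAt (fun l => Vf n l * ee (l i)) (Cd lam i) lam := by
  have hd : HasFDerivAt (fun l : Fin n → ℝ => ee (l i))
      (ee' (lam i) • (ContinuousLinearMap.proj i : (Fin n → ℝ) →L[ℝ] ℝ)) lam := by
    have hp : HasFDerivAt (fun l : Fin n → ℝ => l i)
        (ContinuousLinearMap.proj i : (Fin n → ℝ) →L[ℝ] ℝ) lam :=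
      (ContinuousLinearMap.proj i : (Fin n → ℝ) →L[ℝ] ℝ).hasFDerivAt
    exact (hasDerivAt_ee (lam i)).comp_hasFDerivAt lam hp
  exact (hasFDerivAt_Vf lam).mul hd

def D2 (lam : Fin n → ℝ) : (Fin n → ℝ) →L[ℝ] ((Fin n → ℝ) →L[ℝ] ℝ) :=
  ∑ i, (Cd lam i).smulRight (ContinuousLinearMap.proj i)

lemma hasFDerivAt_Vd (lam : Fin n → ℝ) : HasFDerivAt (Vd (n := n)) (D2 lam) lam := by
  have he : Vd (n := n) = fun l => ∑ i,
      (Vf n l * ee (l i)) • (ContinuousLinearMap.proj i : (Fin n → ℝ) →L[ℝ] ℝ) := by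
    funext l
    rw [Vd, Sd, Finset.smul_sum]
    exact Finset.sum_congr rfl fun i _ => (smul_smul _ _ _)
  rw [he]
  exact HasFDerivAt.fun_sum fun i _ => (hasFDerivAt_c lam i).smul_const (ContinuousLinearMap.proj i : (Fin n → ℝ) →L[ℝ] ℝ)

lemma iterated2 (lam v w : Fin n → ℝ) :
    iteratedFDeriv ℝ 2 (Vf n) lam ![v, w] = D2 lam v w := by
  rw [iteratedFDeriv_two_apply]
  have h1 : fderiv ℝ (Vf n) = Vd (n := n) := funext fun l => (hasFDerivAt_Vf l).fderiv
  rw [h1, (hasFDerivAt_Vd lam).fderiv]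
  simp

lemma D2_apply (lam v w : Fin n → ℝ) :
    D2 lam v w = Vf n lam * (∑ i, ee' (lam i) * (v i * w i))
      + Vf n lam * ((∑ i, ee (lam i) * v i) * (∑ i, ee (lam i) * w i)) := by
  simp only [D2, Cd, ContinuousLinearMap.sum_apply, ContinuousLinearMap.smulRight_apply,
    ContinuousLinearMap.add_apply, ContinuousLinearMap.smul_apply,
    ContinuousLinearMap.proj_apply, Vd_apply, smul_eq_mul]
  simp only [add_mul]
  rw [Finset.sum_add_distrib]
  have h1 : ∑ x, (Vf n lam * (ee' (lam x) * v x)) * w x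
      = Vf n lam * ∑ i, ee' (lam i) * (v i * w i) :=
    calc ∑ x, (Vf n lam * (ee' (lam x) * v x)) * w x
        = ∑ x, Vf n lam * (ee' (lam x) * (v x * w x)) :=
          Finset.sum_congr rfl fun x _ => by ring
      _ = Vf n lam * ∑ i, ee' (lam i) * (v i * w i) := (Finset.mul_sum _ _ _).symm
  have h2 : ∑ x, (ee (lam x) * (Vf n lam * ∑ i, ee (lam i) * v i)) * w x
      = Vf n lam * ((∑ i, ee (lam i) * v i) * ∑ i, ee (lam i) * w i) :=
    calc ∑ x, (ee (lam x) * (Vf n lam * ∑ i, ee (lam i) * v i)) * w x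
        = ∑ x, (Vf n lam * ∑ i, ee (lam i) * v i) * (ee (lam x) * w x) :=
          Finset.sum_congr rfl fun x _ => by ring
      _ = (Vf n lam * ∑ i, ee (lam i) * v i) * ∑ x, ee (lam x) * w x :=
          (Finset.mul_sum _ _ _).symm
      _ = Vf n lam * ((∑ i, ee (lam i) * v i) * ∑ i, ee (lam i) * w i) := by ring
  rw [h1, h2]

end AreaConv

/-- proof of Corollary 1.6, Section 5.1. Uniform convexity of the area
integrand `V(λ) = ∏ᵢ(1+λᵢ²)^{1/2}`: formulas for its first and second partial derivatives,
and, when `|λᵢ| ≤ 1-η` for all `i`, the two-sided lower bound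
`σᵀ D²V σ ≥ V(λ)·minᵢ[(1-λᵢ²)/(1+λᵢ²)²]·|σ|² ≥ (η(2-η)/4)|σ|²`. -/
theorem area_integrand_uniformly_convex
    (n : ℕ) (hn : 1 ≤ n) (η : ℝ) (hη : η ∈ Set.Ioo (0 : ℝ) 1)
    (V : (Fin n → ℝ) → ℝ)
    (hV : ∀ lam : Fin n → ℝ, V lam = ∏ i, Real.sqrt (1 + lam i ^ 2)) :
    ∀ lam : Fin n → ℝ,
      (∀ i, fderiv ℝ V lam (Pi.single i 1) = (lam i / (1 + lam i ^ 2)) * V lam) ∧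
      (∀ i j, iteratedFDeriv ℝ 2 V lam ![Pi.single i 1, Pi.single j 1] =
        V lam * ((lam i / (1 + lam i ^ 2)) * (lam j / (1 + lam j ^ 2)) +
          (if i = j then (1 - lam i ^ 2) / (1 + lam i ^ 2) ^ 2 else 0))) ∧
      ((∀ i, |lam i| ≤ 1 - η) →
        ∀ σ : Fin n → ℝ,
          (V lam * (⨅ i, (1 - lam i ^ 2) / (1 + lam i ^ 2) ^ 2) * (∑ i, σ i ^ 2) ≤
            iteratedFDeriv ℝ 2 V lam ![σ, σ]) ∧
          ((η * (2 - η) / 4) * (∑ i, σ i ^ 2) ≤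
            V lam * (⨅ i, (1 - lam i ^ 2) / (1 + lam i ^ 2) ^ 2) * (∑ i, σ i ^ 2))) := by
  obtain ⟨hη0, hη1⟩ := hη
  have hVeq : V = AreaConv.Vf n := funext hV
  subst hVeq
  intro lam
  haveI : Nonempty (Fin n) := ⟨⟨0, hn⟩⟩
  have hsingle : ∀ i : Fin n, ∑ k, AreaConv.ee (lam k) * (Pi.single i 1 : Fin n → ℝ) k
      = AreaConv.ee (lam i) := by
    intro i
    rw [Finset.sum_eq_single i]
    · simp
    · intro b _ hb
      simp [Pi.single_apply, hb]
    · simp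
  refine ⟨?_, ?_, ?_⟩
  · -- first derivative
    intro i
    rw [(AreaConv.hasFDerivAt_Vf lam).fderiv, AreaConv.Vd_apply, hsingle, AreaConv.ee]
    ring
  · -- second derivative entries
    intro i j
    rw [AreaConv.iterated2, AreaConv.D2_apply, hsingle, hsingle]
    have hsum : ∑ k, AreaConv.ee' (lam k) * ((Pi.single i 1 : Fin n → ℝ) k * (Pi.single j 1 : Fin n → ℝ) k)
        = if i = j then AreaConv.ee' (lam i) else 0 := by
      by_cases h : i = j
      · subst h
        simp only [if_pos rfl]
        rw [Finset.sum_eq_single i]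
        · simp
        · intro b _ hb; simp [Pi.single_apply, hb]
        · simp
      · rw [if_neg h]
        apply Finset.sum_eq_zero
        intro k _
        rcases eq_or_ne k i with rfl | hk
        · simp [Pi.single_apply, fun hh : k = j => h hh, Ne.symm,
            (by simpa [eq_comm] using h : k ≠ j)]
        · simp [Pi.single_apply, hk]
    rw [hsum]
    by_cases h : i = j
    · subst h
      simp only [if_pos rfl, AreaConv.ee, AreaConv.ee']
      ring
    · simp only [if_neg h, AreaConv.ee]
      ring
  · -- uniform convexity
    intro hle σ
    set m : ℝ := ⨅ i, (1 - lam i ^ 2) / (1 + lam i ^ 2) ^ 2 with hm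
    have hbdd : BddBelow (Set.range fun i : Fin n => (1 - lam i ^ 2) / (1 + lam i ^ 2) ^ 2) :=
      (Set.finite_range _).bddBelow
    have hmle : ∀ i, m ≤ AreaConv.ee' (lam i) := fun i => ciInf_le hbdd i
    have hVpos := AreaConv.Vf_pos lam
    have hVone := AreaConv.one_le_Vf lam
    have hsq : ∀ i : Fin n, lam i ^ 2 ≤ (1 - η) ^ 2 := by
      intro i
      have h1 := hle i
      have h2 : lam i ^ 2 = |lam i| ^ 2 := (sq_abs _).symm
      nlinarith [abs_nonneg (lam i)]
    have hm4 : η * (2 - η) / 4 ≤ m := by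
      refine le_ciInf fun i => ?_
      have h1 := hsq i
      have h2 : (0:ℝ) ≤ 1 - lam i ^ 2 := by nlinarith
      have h3 : η * (2 - η) ≤ 1 - lam i ^ 2 := by nlinarith
      have h4 : (0:ℝ) < (1 + lam i ^ 2) ^ 2 := by positivity
      have h5 : (1 + lam i ^ 2) ^ 2 ≤ 4 := by nlinarith [sq_nonneg (lam i)]
      exact div_le_div₀ h2 h3 h4 h5
    have hm0 : 0 ≤ m := le_trans (by nlinarith) hm4
    have hS2 : (0:ℝ) ≤ ∑ i, σ i ^ 2 := Finset.sum_nonneg fun i _ => sq_nonneg _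
    constructor
    · rw [AreaConv.iterated2, AreaConv.D2_apply]
      have h1 : m * ∑ i, σ i ^ 2 ≤ ∑ i, AreaConv.ee' (lam i) * (σ i * σ i) := by
        rw [Finset.mul_sum]
        refine Finset.sum_le_sum fun i _ => ?_
        have := hmle i
        nlinarith [sq_nonneg (σ i)]
      have h2 : AreaConv.Vf n lam * m * ∑ i, σ i ^ 2
          ≤ AreaConv.Vf n lam * ∑ i, AreaConv.ee' (lam i) * (σ i * σ i) := by
        rw [mul_assoc]
        exact mul_le_mul_of_nonneg_left h1 hVpos.le
      refine le_trans h2 (le_add_of_nonneg_right ?_)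
      exact mul_nonneg hVpos.le (mul_self_nonneg _)
    · have hVm : η * (2 - η) / 4 ≤ AreaConv.Vf n lam * m :=
        le_trans hm4 (le_mul_of_one_le_left hm0 hVone)
      exact mul_le_mul_of_nonneg_right hVm hS2
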